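/- As n → ∞, the proportion of permutations of an n-element set that possess a cycle of length strictly greater than n/2 (i.e., the number of such permutations divided by n!) converges to log 2. -/

import Mathlib

set_option linter.unusedSectionVars false
set_option linter.unnecessarySimpa false
set_option maxHeartbeats 1000000

open Finset Filter
open scoped Classical

/-- The multiset of all cycle lengths of a permutation of `Fin n`, counting each fixed point
as a cycle of length 1. -/
def fullCycleType {n : ℕ} (σ : Equiv.Perm (Fin n)) : Multiset ℕ :=
  σ.cycleType + Multiset.replicate (n - σ.support.card) 1

namespace LongCycleAux
open Equiv Equiv.Perm
open Equiv Equiv.Perm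

universe u

variable {α : Type u} [Fintype α] [DecidableEq α]

/-- The orbit of a point under a permutation, as a finset. -/
def orb (f : Perm α) (a : α) : Finset α := univ.filter (f.SameCycle a)

lemma mem_orb {f : Perm α} {a x : α} : x ∈ orb f a ↔ f.SameCycle a x := by
  simp [orb]

/-- The length of the cycle of `f` containing `a` (fixed points giving `1`). -/
def olen (f : Perm α) (a : α) : ℕ := (orb f a).card

lemma self_mem_orb (f : Perm α) (a : α) : a ∈ orb f a := mem_orb.2 (SameCycle.refl f a)

lemma apply_mem_orb {f : Perm α} {a x : α} (hx : x ∈ orb f a) : f x ∈ orb f a :=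
  mem_orb.2 ((mem_orb.1 hx).apply_right)

lemma orb_subset_of_closed {f : Perm α} {a : α} {s : Finset α}
    (ha : a ∈ s) (hs : ∀ x ∈ s, f x ∈ s) : orb f a ⊆ s := by
  intro x hx
  obtain ⟨i, -, rfl⟩ := (mem_orb.1 hx).exists_pow_eq'
  clear hx
  induction i with
  | zero => simpa using ha
  | succ n ih =>
    rw [pow_succ', mul_apply]
    exact hs _ ih

lemma olen_eq_one_iff {f : Perm α} {a : α} : olen f a = 1 ↔ f a = a := by
  constructor
  · intro h
    obtain ⟨b, hb⟩ := Finset.card_eq_one.mp h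
    have ha := self_mem_orb f a
    have hfa := apply_mem_orb ha
    rw [hb, Finset.mem_singleton] at ha hfa
    rw [hfa, ha]
  · intro h
    have horb : orb f a = {a} := by
      apply Finset.Subset.antisymm
      · apply orb_subset_of_closed (Finset.mem_singleton_self a)
        intro x hx
        rw [Finset.mem_singleton] at hx ⊢
        rw [hx, h]
      · simp [self_mem_orb]
    simp [olen, horb]

lemma sameCycle_subtypePerm {f : Perm α} {p : α → Prop} [DecidablePred p]
    (h : ∀ x, p x ↔ p (f x)) {u v : Subtype p} :
    (f.subtypePerm (fun x => (h x).symm)).SameCycle u v ↔ f.SameCycle u.1 v.1 := by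
  constructor
  · rintro ⟨i, hi⟩
    refine ⟨i, ?_⟩
    rw [subtypePerm_zpow] at hi
    simpa [Subtype.ext_iff] using hi
  · rintro ⟨i, hi⟩
    refine ⟨i, ?_⟩
    rw [subtypePerm_zpow]
    exact Subtype.ext (by simpa using hi)

lemma olen_subtypePerm {f : Perm α} {p : α → Prop} [DecidablePred p]
    (h : ∀ x, p x ↔ p (f x)) {a : α} (ha : p a) :
    olen (f.subtypePerm (fun x => (h x).symm)) ⟨a, ha⟩ = ((orb f a).filter p).card := by
  apply Finset.card_bij (fun u _ => u.1)
  · intro u hu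
    rw [mem_orb] at hu
    rw [Finset.mem_filter, mem_orb]
    exact ⟨(sameCycle_subtypePerm h).1 hu, u.2⟩
  · intro u _ v _ huv
    exact Subtype.ext huv
  · intro x hx
    rw [Finset.mem_filter, mem_orb] at hx
    exact ⟨⟨x, hx.2⟩, mem_orb.2 ((sameCycle_subtypePerm h).2 hx.1), rfl⟩

lemma not_mem_orb_of_fixed {f : Perm α} {a b : α} (hb : f b = b) (hab : a ≠ b) :
    b ∉ orb f a := by
  intro hmem
  exact hab ((mem_orb.1 hmem).eq_of_right hb)

/-- Deleting `σ a` from the cycle of `a`. -/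
lemma orb_mul_swap {σ : Perm α} {a : α} (hab : σ a ≠ a) :
    orb (σ * Equiv.swap a (σ a)) a = (orb σ a).erase (σ a) := by
  set b := σ a with hb
  set τ := σ * Equiv.swap a b with hτ
  have hτb : τ b = b := by
    simp [hτ, mul_apply, Equiv.swap_apply_right, hb]
  have hτa : τ a = σ b := by
    simp [hτ, mul_apply, Equiv.swap_apply_left]
  have hτx : ∀ x, x ≠ a → x ≠ b → τ x = σ x := by
    intro x hxa hxb
    simp [hτ, mul_apply, Equiv.swap_apply_of_ne_of_ne hxa hxb]
  have hba : b ≠ a := hab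
  have hbS : b ∈ orb σ a := mem_orb.2 ⟨1, by simpa using hb.symm⟩
  apply Finset.Subset.antisymm
  · apply orb_subset_of_closed
    · exact Finset.mem_erase.2 ⟨hba.symm, self_mem_orb σ a⟩
    · intro x hx
      obtain ⟨hxb, hxS⟩ := Finset.mem_erase.1 hx
      by_cases hxa : x = a
      · subst hxa
        rw [hτa]
        refine Finset.mem_erase.2 ⟨?_, apply_mem_orb hbS⟩
        intro hcontra
        exact hba (σ.injective hcontra)
      · rw [hτx x hxa hxb]
        refine Finset.mem_erase.2 ⟨?_, apply_mem_orb hxS⟩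
        intro hcontra
        exact hxa (σ.injective (hcontra.trans hb))
  · have hsub : orb σ a ⊆ insert b (orb τ a) := by
      apply orb_subset_of_closed
      · exact Finset.mem_insert_of_mem (self_mem_orb τ a)
      · intro x hx
        rcases Finset.mem_insert.1 hx with rfl | hx'
        · rw [← hτa]
          exact Finset.mem_insert_of_mem (apply_mem_orb (self_mem_orb τ a))
        · by_cases hxa : x = a
          · subst hxa
            rw [← hb]
            exact Finset.mem_insert_self _ _
          · have hxb : x ≠ b := by
              intro hcontra
              exact (not_mem_orb_of_fixed hτb hba.symm) (hcontra ▸ hx')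
            rw [← hτx x hxa hxb]
            exact Finset.mem_insert_of_mem (apply_mem_orb hx')
    intro x hx
    obtain ⟨hxb, hxS⟩ := Finset.mem_erase.1 hx
    rcases Finset.mem_insert.1 (hsub hxS) with rfl | h
    · exact absurd rfl hxb
    · exact h

open Equiv Equiv.Perm

variable {α : Type*} [Fintype α] [DecidableEq α]



lemma subtypePerm_congr {f g : Perm α} {p : α → Prop} [DecidablePred p]
    (hfg : f = g) (h : ∀ x, p (f x) ↔ p x) :
    f.subtypePerm h = g.subtypePerm (by rw [← hfg]; exact h) := by
  subst hfg; rfl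

lemma swap_prop {σ : Perm α} {a b : α} (hσ : σ a = b) :
    ∀ x : α, x ≠ b ↔ (σ * Equiv.swap a b) x ≠ b := by
  have hfix : (σ * Equiv.swap a b) b = b := by
    simp [mul_apply, Equiv.swap_apply_right, hσ]
  intro x
  constructor
  · intro hx hcontra
    exact hx ((σ * Equiv.swap a b).injective (hcontra.trans hfix.symm))
  · intro hx hcontra
    subst hcontra
    exact hx hfix

lemma olen_ofSubtype {b : α} (τ : Perm {x : α // x ≠ b}) {a : α} (hab : a ≠ b) :
    olen (ofSubtype τ) a = olen τ ⟨a, hab⟩ := by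
  have hfixb : ofSubtype τ b = b := ofSubtype_apply_of_not_mem τ (by simp)
  have h : ∀ x : α, x ≠ b ↔ ofSubtype τ x ≠ b := by
    intro x
    constructor
    · intro hx hcontra
      exact hx ((ofSubtype τ).injective (hcontra.trans hfixb.symm))
    · intro hx hcontra
      subst hcontra; exact hx hfixb
  have key := olen_subtypePerm h hab
  rw [show (ofSubtype τ).subtypePerm (fun x => (h x).symm) = τ from subtypePerm_ofSubtype τ] at key
  rw [key]
  show (orb (ofSubtype τ) a).card = _
  congr 1
  symm
  apply Finset.filter_true_of_mem
  intro x hx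
  intro hcontra
  subst hcontra
  exact not_mem_orb_of_fixed hfixb hab hx

lemma card_fiber_step {a b : α} (hba : b ≠ a) {l : ℕ} (hl : 1 ≤ l) :
    (univ.filter fun σ : Perm α => olen σ a = l + 1 ∧ σ a = b).card
      = (univ.filter fun τ : Perm {x : α // x ≠ b} =>
          olen τ ⟨a, Ne.symm hba⟩ = l).card := by
  refine Finset.card_bij'
    (fun σ hσ => subtypePerm (σ * Equiv.swap a b)
      (fun x => (swap_prop (Finset.mem_filter.1 hσ).2.2 x).symm))
    (fun τ _ => ofSubtype τ * Equiv.swap a b) ?hi ?hj ?left ?right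
  case hi =>
    intro σ hσ
    obtain ⟨-, hσl, hσa⟩ := Finset.mem_filter.1 hσ
    rw [Finset.mem_filter]
    refine ⟨Finset.mem_univ _, ?_⟩
    have hab : σ a ≠ a := by
      intro hcontra
      rw [olen_eq_one_iff.2 hcontra] at hσl
      omega
    have horb : orb (σ * Equiv.swap a b) a = (orb σ a).erase b := by
      have := orb_mul_swap hab
      rwa [hσa] at this
    have hbmem : b ∈ orb σ a := by
      rw [← hσa]
      exact mem_orb.2 ⟨1, by simp⟩
    rw [olen_subtypePerm (swap_prop hσa), horb,
      Finset.filter_true_of_mem (fun x hx => (Finset.mem_erase.1 hx).1),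
      Finset.card_erase_of_mem hbmem]
    have hcard : (orb σ a).card = l + 1 := hσl
    omega
  case hj =>
    intro τ hτ
    obtain ⟨-, hτl⟩ := Finset.mem_filter.1 hτ
    set σ := ofSubtype τ * Equiv.swap a b with hσdef
    have hfixb : ofSubtype τ b = b := ofSubtype_apply_of_not_mem τ (by simp)
    have hσa : σ a = b := by simp [hσdef, mul_apply, Equiv.swap_apply_left, hfixb]
    have hcancel : σ * Equiv.swap a b = ofSubtype τ := by
      rw [hσdef, mul_assoc, Equiv.swap_mul_self, mul_one]
    rw [Finset.mem_filter]
    refine ⟨Finset.mem_univ _, ?_, hσa⟩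
    have hab : σ a ≠ a := by rw [hσa]; exact hba
    have horb : orb (ofSubtype τ) a = (orb σ a).erase b := by
      have := orb_mul_swap hab
      rwa [hσa, hcancel] at this
    have hbmem : b ∈ orb σ a := mem_orb.2 ⟨1, by simpa using hσa⟩
    have hpos : 0 < (orb σ a).card := Finset.card_pos.2 ⟨b, hbmem⟩
    have holen : olen (ofSubtype τ) a = l := by
      rw [olen_ofSubtype τ (Ne.symm hba), hτl]
    have : (orb σ a).card - 1 = l := by
      rw [← Finset.card_erase_of_mem hbmem, ← horb]
      exact holen
    show (orb σ a).card = l + 1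
    omega
  case left =>
    intro σ hσ
    beta_reduce
    obtain ⟨-, -, hσa⟩ := Finset.mem_filter.1 hσ
    have hfix : (σ * Equiv.swap a b) b = b := by
      simp [mul_apply, Equiv.swap_apply_right, hσa]
    rw [ofSubtype_subtypePerm _ ?h2]
    · rw [mul_assoc, Equiv.swap_mul_self, mul_one]
    case h2 =>
      intro x hx
      intro hcontra
      subst hcontra
      exact hx hfix
  case right =>
    intro τ hτ
    beta_reduce
    have hfixb : ofSubtype τ b = b := ofSubtype_apply_of_not_mem τ (by simp)
    have hcancel : (ofSubtype τ * Equiv.swap a b) * Equiv.swap a b = ofSubtype τ := by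
      rw [mul_assoc, Equiv.swap_mul_self, mul_one]
    rw [subtypePerm_congr hcancel]
    exact subtypePerm_ofSubtype τ

open Equiv Equiv.Perm





lemma card_ne (a : α) : Fintype.card {x : α // x ≠ a} = Fintype.card α - 1 := by
  simp [Fintype.card_subtype_compl]

lemma card_olen_one (a : α) :
    (univ.filter fun σ : Perm α => olen σ a = 1).card = (Fintype.card α - 1).factorial := by
  have hcongr : (univ.filter fun σ : Perm α => olen σ a = 1)
      = (univ.filter fun σ : Perm α => σ a = a) := by
    apply Finset.filter_congr
    intro σ _
    simp [olen_eq_one_iff]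
  rw [hcongr, ← Fintype.card_subtype]
  have e : {σ : Perm α // σ a = a} ≃ Perm {x : α // x ≠ a} := by
    refine Equiv.trans (Equiv.subtypeEquivRight ?_) (Equiv.Perm.subtypeEquivSubtypePerm _).symm
    intro f
    constructor
    · intro h x hx
      rw [not_not] at hx
      subst hx; exact h
    · intro h
      exact h a (not_not_intro rfl)
  rw [Fintype.card_congr e, Fintype.card_perm, card_ne]

lemma card_olen (l : ℕ) : ∀ (α : Type u) [Fintype α] [DecidableEq α] (a : α),
    1 ≤ l → l ≤ Fintype.card α →
    (univ.filter fun σ : Perm α => olen σ a = l).card = (Fintype.card α - 1).factorial := by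
  induction l with
  | zero => intro α _ _ a h _; omega
  | succ l ih =>
    intro α _ _ a _ hle
    rcases Nat.eq_zero_or_pos l with rfl | hl
    · exact card_olen_one a
    · have hcard2 : 2 ≤ Fintype.card α := le_trans (by omega) hle
      have hne1 : ∀ σ : Perm α, olen σ a = l + 1 → σ a ≠ a := by
        intro σ hσ hcontra
        rw [olen_eq_one_iff.2 hcontra] at hσ
        omega
      have key := Finset.card_eq_sum_card_fiberwise
        (f := fun σ : Perm α => σ a)
        (s := univ.filter fun σ : Perm α => olen σ a = l + 1)
        (t := univ.filter fun b : α => b ≠ a)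
        (by
          intro σ hσ
          rw [Finset.mem_coe, Finset.mem_filter] at hσ ⊢
          exact ⟨Finset.mem_univ _, hne1 σ hσ.2⟩)
      rw [key]
      have hterm : ∀ b ∈ univ.filter fun b : α => b ≠ a,
          ((univ.filter fun σ : Perm α => olen σ a = l + 1).filter
            (fun σ => σ a = b)).card = (Fintype.card α - 2).factorial := by
        intro b hb
        have hba : b ≠ a := (Finset.mem_filter.1 hb).2
        rw [Finset.filter_filter, card_fiber_step hba hl,
          ih {x : α // x ≠ b} ⟨a, Ne.symm hba⟩ hl (by rw [card_ne]; omega), card_ne]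
        congr 1
      rw [Finset.sum_congr rfl hterm, Finset.sum_const, Finset.filter_ne',
        Finset.card_erase_of_mem (Finset.mem_univ a), Finset.card_univ, smul_eq_mul]
      have h1 : 0 < Fintype.card α - 1 := by omega
      have h2 : Fintype.card α - 1 - 1 = Fintype.card α - 2 := by omega
      rw [← h2, Nat.mul_factorial_pred (Nat.pos_iff_ne_zero.mp h1)]

open Equiv Equiv.Perm




lemma orb_eq_support_cycleOf {σ : Perm α} {a : α} (ha : a ∈ σ.support) :
    orb σ a = (σ.cycleOf a).support := by
  ext x
  rw [mem_orb, mem_support_cycleOf_iff]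
  exact ⟨fun h => ⟨h, ha⟩, fun h => h.1⟩

variable {n : ℕ}

lemma olen_mem_fullCycleType (σ : Perm (Fin n)) (a : Fin n) :
    olen σ a ∈ fullCycleType σ := by
  by_cases ha : a ∈ σ.support
  · apply Multiset.mem_add.2 (Or.inl _)
    rw [cycleType_def, Multiset.mem_map]
    refine ⟨σ.cycleOf a, ?_, ?_⟩
    · exact (cycleOf_mem_cycleFactorsFinset_iff.2 ha : _)
    · rw [Function.comp_apply]
      rw [olen, orb_eq_support_cycleOf ha]
  · rw [notMem_support] at ha
    have h1 : olen σ a = 1 := olen_eq_one_iff.2 ha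
    rw [h1]
    apply Multiset.mem_add.2 (Or.inr _)
    rw [Multiset.mem_replicate]
    refine ⟨?_, rfl⟩
    have hlt : σ.support.card < n := by
      have hsub : σ.support ⊂ univ := by
        rw [Finset.ssubset_univ_iff]
        intro hcontra
        have : a ∈ σ.support := hcontra ▸ Finset.mem_univ a
        rw [mem_support] at this
        exact this ha
      have := Finset.card_lt_card hsub
      simpa using this
    omega

lemma exists_olen_of_mem {σ : Perm (Fin n)} {l : ℕ} (h : l ∈ fullCycleType σ) :
    ∃ a, olen σ a = l := by
  rcases Multiset.mem_add.1 h with h | h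
  · rw [cycleType_def, Multiset.mem_map] at h
    obtain ⟨c, hc, hl⟩ := h
    have hcmem : c ∈ σ.cycleFactorsFinset := hc
    have hcyc : c.IsCycle := (mem_cycleFactorsFinset_iff.1 hcmem).1
    obtain ⟨a, ha⟩ := hcyc.nonempty_support
    have hceq : c = σ.cycleOf a := cycle_is_cycleOf ha hcmem
    have hasupp : a ∈ σ.support := by
      apply support_cycleOf_le σ a
      rw [← hceq]; exact ha
    refine ⟨a, ?_⟩
    rw [olen, orb_eq_support_cycleOf hasupp, ← hceq]
    exact hl
  · rw [Multiset.mem_replicate] at h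
    obtain ⟨hne, rfl⟩ := h
    have : ∃ a : Fin n, a ∉ σ.support := by
      by_contra hcontra
      push_neg at hcontra
      have : σ.support = univ := Finset.eq_univ_iff_forall.2 hcontra
      rw [this] at hne
      simp at hne
    obtain ⟨a, ha⟩ := this
    rw [notMem_support] at ha
    exact ⟨a, olen_eq_one_iff.2 ha⟩

lemma fullCycleType_sum (σ : Perm (Fin n)) : (fullCycleType σ).sum = n := by
  have hle : σ.support.card ≤ n := by
    have := Finset.card_le_univ σ.support
    simpa using this
  rw [fullCycleType, Multiset.sum_add, sum_cycleType, Multiset.sum_replicate, smul_eq_mul,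
    mul_one]
  omega

lemma orb_congr {σ : Perm (Fin n)} {a x : Fin n} (h : σ.SameCycle a x) :
    orb σ x = orb σ a := by
  ext y
  rw [mem_orb, mem_orb]
  exact ⟨fun hy => h.trans hy, fun hy => h.symm.trans hy⟩

lemma card_fiber_points {σ : Perm (Fin n)} {l : ℕ} (hln : 2 * l > n)
    (hmem : l ∈ fullCycleType σ) :
    (univ.filter fun a : Fin n => olen σ a = l).card = l := by
  obtain ⟨a₀, ha₀⟩ := exists_olen_of_mem hmem
  have hfilter : (univ.filter fun a : Fin n => olen σ a = l) = orb σ a₀ := by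
    ext x
    rw [Finset.mem_filter]
    constructor
    · rintro ⟨-, hx⟩
      rw [mem_orb]
      by_contra hcontra
      have hdisj : Disjoint (orb σ a₀) (orb σ x) := by
        rw [Finset.disjoint_left]
        intro y hy hy'
        exact hcontra ((mem_orb.1 hy).trans (mem_orb.1 hy').symm)
      have hcard : (orb σ a₀ ∪ orb σ x).card = 2 * l := by
        rw [Finset.card_union_of_disjoint hdisj]
        rw [show (orb σ a₀).card = olen σ a₀ from rfl,
          show (orb σ x).card = olen σ x from rfl, ha₀, hx]
        ring
      have hle : (orb σ a₀ ∪ orb σ x).card ≤ n := by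
        have := Finset.card_le_univ (orb σ a₀ ∪ orb σ x)
        simpa using this
      omega
    · intro hx
      refine ⟨Finset.mem_univ _, ?_⟩
      rw [olen, orb_congr (mem_orb.1 hx), ← olen]
      exact ha₀
  rw [hfilter]
  exact ha₀

lemma l_mul_cardB {l : ℕ} (hl1 : 1 ≤ l) (hln : l ≤ n) (h2l : 2 * l > n) :
    l * (univ.filter fun σ : Perm (Fin n) => l ∈ fullCycleType σ).card = n.factorial := by
  have hswap : (∑ a : Fin n, (univ.filter fun σ : Perm (Fin n) => olen σ a = l).card)
      = ∑ σ : Perm (Fin n), (univ.filter fun a : Fin n => olen σ a = l).card := by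
    simp only [Finset.card_filter]
    exact Finset.sum_comm
  have h1 : (∑ a : Fin n, (univ.filter fun σ : Perm (Fin n) => olen σ a = l).card)
      = n * (n - 1).factorial := by
    rw [Finset.sum_congr rfl (fun a _ => card_olen l (Fin n) a hl1 (by simpa using hln))]
    simp [Finset.card_univ, mul_comm]
  have h2 : (∑ σ : Perm (Fin n), (univ.filter fun a : Fin n => olen σ a = l).card)
      = l * (univ.filter fun σ : Perm (Fin n) => l ∈ fullCycleType σ).card := by
    have hterm : ∀ σ : Perm (Fin n),
        (univ.filter fun a : Fin n => olen σ a = l).card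
          = if l ∈ fullCycleType σ then l else 0 := by
      intro σ
      by_cases hmem : l ∈ fullCycleType σ
      · rw [if_pos hmem]
        exact card_fiber_points h2l hmem
      · rw [if_neg hmem]
        rw [Finset.card_eq_zero, Finset.filter_eq_empty_iff]
        intro a _
        intro hcontra
        exact hmem (hcontra ▸ olen_mem_fullCycleType σ a)
    rw [Finset.sum_congr rfl (fun σ _ => hterm σ), ← Finset.sum_filter]
    rw [Finset.sum_const, smul_eq_mul, mul_comm]
  rw [← h2, ← hswap, h1, Nat.mul_factorial_pred (by omega)]

lemma card_E_eq :
    (univ.filter fun σ : Perm (Fin n) => ∃ l ∈ fullCycleType σ, 2 * l > n).card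
      = ∑ l ∈ Finset.Ioc (n / 2) n,
          (univ.filter fun σ : Perm (Fin n) => l ∈ fullCycleType σ).card := by
  have hE : (univ.filter fun σ : Perm (Fin n) => ∃ l ∈ fullCycleType σ, 2 * l > n)
      = (Finset.Ioc (n / 2) n).biUnion
          (fun l => univ.filter fun σ : Perm (Fin n) => l ∈ fullCycleType σ) := by
    ext σ
    rw [Finset.mem_filter, Finset.mem_biUnion]
    constructor
    · rintro ⟨-, l, hmem, h2l⟩
      refine ⟨l, ?_, Finset.mem_filter.2 ⟨Finset.mem_univ _, hmem⟩⟩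
      rw [Finset.mem_Ioc]
      constructor
      · rw [Nat.div_lt_iff_lt_mul (by norm_num)]
        omega
      · have := Multiset.single_le_sum (fun x _ => Nat.zero_le x) l hmem
        rw [fullCycleType_sum] at this
        exact this
    · rintro ⟨l, hlmem, hσ⟩
      rw [Finset.mem_Ioc] at hlmem
      have h2l : 2 * l > n := by
        have := hlmem.1
        rw [Nat.div_lt_iff_lt_mul (by norm_num)] at this
        omega
      exact ⟨Finset.mem_univ _, l, (Finset.mem_filter.1 hσ).2, h2l⟩
  rw [hE]
  apply Finset.card_biUnion
  intro l hl l' hl' hne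
  rw [Finset.mem_coe, Finset.mem_Ioc] at hl hl'
  rw [Function.onFun, Finset.disjoint_left]
  intro σ hσ hσ'
  have hmem : l ∈ fullCycleType σ := (Finset.mem_filter.1 hσ).2
  have hmem' : l' ∈ fullCycleType σ := (Finset.mem_filter.1 hσ').2
  have hsum : l + l' ≤ (fullCycleType σ).sum := by
    have hcons : l ::ₘ (fullCycleType σ).erase l = fullCycleType σ :=
      Multiset.cons_erase hmem
    have hmem'' : l' ∈ (fullCycleType σ).erase l :=
      (Multiset.mem_erase_of_ne hne.symm).2 hmem'
    have hle' : l' ≤ ((fullCycleType σ).erase l).sum :=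
      Multiset.single_le_sum (fun x _ => Nat.zero_le x) l' hmem''
    calc l + l' ≤ l + ((fullCycleType σ).erase l).sum := by omega
    _ = (l ::ₘ (fullCycleType σ).erase l).sum := (Multiset.sum_cons _ _).symm
    _ = (fullCycleType σ).sum := by rw [hcons]
  rw [fullCycleType_sum] at hsum
  have h1 : n < l * 2 := (Nat.div_lt_iff_lt_mul (by norm_num)).1 hl.1
  have h2 : n < l' * 2 := (Nat.div_lt_iff_lt_mul (by norm_num)).1 hl'.1
  omega

lemma prob_eq (n : ℕ) :
    ((univ.filter fun σ : Perm (Fin n) => ∃ l ∈ fullCycleType σ, 2 * l > n).card : ℝ)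
        / (n.factorial : ℝ)
      = ∑ l ∈ Finset.Ioc (n / 2) n, ((l : ℝ))⁻¹ := by
  rw [card_E_eq]
  push_cast
  rw [Finset.sum_div]
  apply Finset.sum_congr rfl
  intro l hl
  rw [Finset.mem_Ioc] at hl
  have h1 : n < l * 2 := (Nat.div_lt_iff_lt_mul (by norm_num)).1 hl.1
  have hl1 : 1 ≤ l := by omega
  have key := l_mul_cardB (n := n) hl1 hl.2 (by omega)
  have hkey : (l : ℝ) * ((univ.filter fun σ : Perm (Fin n) => l ∈ fullCycleType σ).card : ℝ)
      = (n.factorial : ℝ) := by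
    exact_mod_cast congrArg (Nat.cast : ℕ → ℝ) key
  have hfact : (n.factorial : ℝ) ≠ 0 := by
    exact_mod_cast Nat.factorial_ne_zero n
  have hlne : (l : ℝ) ≠ 0 := by
    exact_mod_cast (by omega : l ≠ 0)
  field_simp
  linarith [hkey]


lemma harmonic_cast (m : ℕ) :
    ((harmonic m : ℚ) : ℝ) = ∑ l ∈ Finset.Ioc 0 m, ((l : ℝ))⁻¹ := by
  have hIoc : Finset.Ioc 0 m = Finset.Ico 1 (m + 1) := by
    ext x
    simp only [Finset.mem_Ioc, Finset.mem_Ico]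
    omega
  rw [hIoc, Finset.sum_Ico_eq_sum_range]
  simp only [Nat.add_sub_cancel]
  rw [harmonic]
  push_cast
  apply Finset.sum_congr rfl
  intro i _
  rw [add_comm]

lemma sum_Ioc_eq_harmonic_sub (n : ℕ) :
    ∑ l ∈ Finset.Ioc (n / 2) n, ((l : ℝ))⁻¹
      = ((harmonic n : ℚ) : ℝ) - ((harmonic (n / 2) : ℚ) : ℝ) := by
  rw [harmonic_cast, harmonic_cast]
  have h := Finset.sum_Ioc_consecutive (fun l : ℕ => ((l : ℝ))⁻¹)
    (Nat.zero_le (n / 2)) (Nat.div_le_self n 2)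
  linarith [h]

lemma tendsto_div_two : Tendsto (fun n : ℕ => n / 2) atTop atTop := by
  rw [Filter.tendsto_atTop_atTop]
  intro b
  refine ⟨2 * b, fun a ha => ?_⟩
  omega

lemma tendsto_ratio :
    Tendsto (fun n : ℕ => (n : ℝ) / ((n / 2 : ℕ) : ℝ)) atTop (nhds 2) := by
  have hm : Tendsto (fun n : ℕ => ((n / 2 : ℕ) : ℝ)) atTop atTop :=
    tendsto_natCast_atTop_atTop.comp tendsto_div_two
  have hinv : Tendsto (fun n : ℕ => ((n / 2 : ℕ) : ℝ)⁻¹) atTop (nhds 0) :=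
    hm.inv_tendsto_atTop
  have hupper : Tendsto (fun n : ℕ => 2 + ((n / 2 : ℕ) : ℝ)⁻¹) atTop (nhds 2) := by
    have := (tendsto_const_nhds (x := (2:ℝ)) (f := atTop (α := ℕ))).add hinv
    simpa using this
  apply tendsto_of_tendsto_of_tendsto_of_le_of_le'
    (tendsto_const_nhds (x := (2:ℝ))) hupper
  · filter_upwards [Filter.eventually_ge_atTop 2] with n hn
    have hm1 : 1 ≤ n / 2 := by omega
    have hmpos : (0:ℝ) < ((n / 2 : ℕ) : ℝ) := by
      exact_mod_cast (by omega : 0 < n / 2)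
    rw [le_div_iff₀ hmpos]
    have : 2 * (n / 2) ≤ n := by omega
    exact_mod_cast this
  · filter_upwards [Filter.eventually_ge_atTop 2] with n hn
    have hm1 : 1 ≤ n / 2 := by omega
    have hmpos : (0:ℝ) < ((n / 2 : ℕ) : ℝ) := by
      exact_mod_cast (by omega : 0 < n / 2)
    rw [div_le_iff₀ hmpos]
    have hid : (2 + ((n / 2 : ℕ) : ℝ)⁻¹) * ((n / 2 : ℕ) : ℝ)
        = 2 * ((n / 2 : ℕ) : ℝ) + 1 := by
      field_simp
    rw [hid]
    have : n ≤ 2 * (n / 2) + 1 := by omega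
    exact_mod_cast this

lemma tendsto_log_ratio :
    Tendsto (fun n : ℕ => Real.log n - Real.log ((n / 2 : ℕ) : ℝ)) atTop
      (nhds (Real.log 2)) := by
  have hcomp : Tendsto (fun n : ℕ => Real.log ((n : ℝ) / ((n / 2 : ℕ) : ℝ))) atTop
      (nhds (Real.log 2)) :=
    ((Real.continuousAt_log (by norm_num)).tendsto).comp tendsto_ratio
  apply hcomp.congr'
  filter_upwards [Filter.eventually_ge_atTop 2] with n hn
  have h1 : (n : ℝ) ≠ 0 := by
    exact_mod_cast (by omega : n ≠ 0)
  have h2 : ((n / 2 : ℕ) : ℝ) ≠ 0 := by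
    exact_mod_cast (by omega : n / 2 ≠ 0)
  rw [Real.log_div h1 h2]

lemma tendsto_harmonic_diff :
    Tendsto (fun n : ℕ => ((harmonic n : ℚ) : ℝ) - ((harmonic (n / 2) : ℚ) : ℝ)) atTop
      (nhds (Real.log 2)) := by
  have h1 := Real.tendsto_harmonic_sub_log
  have h2 : Tendsto (fun n : ℕ => ((harmonic (n / 2) : ℚ) : ℝ) - Real.log ((n / 2 : ℕ) : ℝ))
      atTop (nhds Real.eulerMascheroniConstant) :=
    h1.comp tendsto_div_two
  have h3 := tendsto_log_ratio
  have hsum := (h1.sub h2).add h3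
  have heq : Real.eulerMascheroniConstant - Real.eulerMascheroniConstant + Real.log 2
      = Real.log 2 := by ring
  rw [heq] at hsum
  apply hsum.congr
  intro n
  ring

lemma tendsto_sum_Ioc :
    Tendsto (fun n : ℕ => ∑ l ∈ Finset.Ioc (n / 2) n, ((l : ℝ))⁻¹) atTop
      (nhds (Real.log 2)) := by
  have := tendsto_harmonic_diff
  apply this.congr
  intro n
  rw [sum_Ioc_eq_harmonic_sub]


end LongCycleAux

theorem prob_long_cycle_tendsto_log_two :
    Tendsto
      (fun n : ℕ =>
        ((Finset.univ.filter fun σ : Equiv.Perm (Fin n) =>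
            ∃ l ∈ fullCycleType σ, 2 * l > n).card : ℝ) / (Nat.factorial n : ℝ))
      atTop (nhds (Real.log 2)) := by
  apply LongCycleAux.tendsto_sum_Ioc.congr
  intro n
  exact (LongCycleAux.prob_eq n).symm
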